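/- A nonempty subset L of the graph group G_F is convex if and only if both of the following hold: (i) if x ≤ y ≤ z and x, z ∈ L then y ∈ L; (ii) if x, y ∈ L then x ∧ y ∈ L and, if x ∨ y is finite, x ∨ y ∈ L. -/

import Mathlib

open Pointwise

namespace GraphGroupPaper

/-- The set of commutator relators: `gᵢ` and `gⱼ` commute for every pair of distinct
`i, j` with `{i,j} ∉ F`. -/
def Rels (k : ℕ) (F : Set (Sym2 (Fin k))) : Set (FreeGroup (Fin k)) :=
  {w | ∃ i j : Fin k, i ≠ j ∧ s(i, j) ∉ F ∧
      w = FreeGroup.of i * FreeGroup.of j * (FreeGroup.of i)⁻¹ * (FreeGroup.of j)⁻¹}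

/-- The graph group `G_F` with generators `g₁, …, g_k` and relations `gᵢgⱼ = gⱼgᵢ`
for all distinct `i, j` with `{i,j} ∉ F`. -/
abbrev Grp (k : ℕ) (F : Set (Sym2 (Fin k))) := PresentedGroup (Rels k F)

/-- The generator `gᵢ` of the graph group. -/
def gen (k : ℕ) (F : Set (Sym2 (Fin k))) (i : Fin k) : Grp k F :=
  PresentedGroup.of i

/-- The group element corresponding to a symbol: `(i, true)` stands for `gᵢ`,
`(i, false)` stands for `gᵢ⁻¹`. -/
def sym (k : ℕ) (F : Set (Sym2 (Fin k))) (α : Fin k × Bool) : Grp k F :=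
  if α.2 then gen k F α.1 else (gen k F α.1)⁻¹

/-- The product of the word `l` of symbols, as an element of the graph group. -/
def wordProd (k : ℕ) (F : Set (Sym2 (Fin k))) (l : List (Fin k × Bool)) : Grp k F :=
  (l.map (sym k F)).prod

/-- `|x|` : the length of a shortest word in the symbols representing `x`. -/
noncomputable def len {k : ℕ} {F : Set (Sym2 (Fin k))} (x : Grp k F) : ℕ :=
  sInf {n | ∃ l : List (Fin k × Bool), wordProd k F l = x ∧ l.length = n}

/-- The partial order on `G_F`:  `x ≤ y` iff `|y| = |x| + |x⁻¹y|`. -/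
def le {k : ℕ} {F : Set (Sym2 (Fin k))} (x y : Grp k F) : Prop :=
  len y = len x + len (x⁻¹ * y)

variable {k : ℕ} {F : Set (Sym2 (Fin k))}

/-! ### letters -/

def ii (α : Fin k × Bool) : Fin k × Bool := (α.1, !α.2)

@[simp] lemma ii_ii (α : Fin k × Bool) : ii (ii α) = α := by simp [ii]

@[simp] lemma ii_fst (α : Fin k × Bool) : (ii α).1 = α.1 := rfl

lemma ii_ne (α : Fin k × Bool) : ii α ≠ α := by
  simp [ii, Prod.ext_iff]

def Cm (F : Set (Sym2 (Fin k))) (α β : Fin k × Bool) : Prop :=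
  α.1 ≠ β.1 ∧ s(α.1, β.1) ∉ F

lemma Cm.symm {α β : Fin k × Bool} (h : Cm F α β) : Cm F β α := by
  refine ⟨h.1.symm, ?_⟩
  rw [Sym2.eq_swap]; exact h.2

@[simp] lemma cm_ii_left {α β : Fin k × Bool} : Cm F (ii α) β ↔ Cm F α β := Iff.rfl

@[simp] lemma cm_ii_right {α β : Fin k × Bool} : Cm F α (ii β) ↔ Cm F α β := Iff.rfl

lemma not_cm_self (α : Fin k × Bool) : ¬ Cm F α α := fun h => h.1 rfl

lemma not_cm_ii (α : Fin k × Bool) : ¬ Cm F α (ii α) := fun h => h.1 rfl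

lemma ne_ii_of_cm {α β : Fin k × Bool} (h : Cm F α β) : β ≠ ii α := by
  intro e; exact h.1 (by rw [e]; rfl)

/-! ### sym and wordProd basics -/

@[simp] lemma sym_ii (α : Fin k × Bool) : sym k F (ii α) = (sym k F α)⁻¹ := by
  rcases α with ⟨i, b⟩; cases b <;> simp [sym, ii]

lemma commute_sym {α β : Fin k × Bool} (h : Cm F α β) :
    Commute (sym k F α) (sym k F β) := by
  have hrel : gen k F α.1 * gen k F β.1 * (gen k F α.1)⁻¹ * (gen k F β.1)⁻¹ = 1 := by
    have hmem : (FreeGroup.of α.1 * FreeGroup.of β.1 * (FreeGroup.of α.1)⁻¹ *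
        (FreeGroup.of β.1)⁻¹ : FreeGroup (Fin k)) ∈ Rels k F := ⟨α.1, β.1, h.1, h.2, rfl⟩
    have : (QuotientGroup.mk (FreeGroup.of α.1 * FreeGroup.of β.1 * (FreeGroup.of α.1)⁻¹ *
        (FreeGroup.of β.1)⁻¹) : Grp k F) = 1 := by
      rw [QuotientGroup.eq_one_iff]
      exact Subgroup.subset_normalClosure hmem
    exact this
  have hc : Commute (gen k F α.1) (gen k F β.1) := by
    rw [mul_inv_eq_one, mul_inv_eq_iff_eq_mul] at hrel
    exact hrel
  rcases α with ⟨i, b⟩; rcases β with ⟨j, b'⟩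
  simp only at hc
  cases b <;> cases b' <;> simp only [sym] <;> simp only [if_true, if_false, Bool.false_eq_true]
  · exact hc.inv_left.inv_right
  · exact hc.inv_left
  · exact hc.inv_right
  · exact hc

@[simp] lemma wordProd_nil : wordProd k F [] = 1 := rfl

@[simp] lemma wordProd_cons (α : Fin k × Bool) (l : List (Fin k × Bool)) :
    wordProd k F (α :: l) = sym k F α * wordProd k F l := by
  simp [wordProd]

@[simp] lemma wordProd_append (l₁ l₂ : List (Fin k × Bool)) :
    wordProd k F (l₁ ++ l₂) = wordProd k F l₁ * wordProd k F l₂ := by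
  simp [wordProd]

@[simp] lemma wordProd_singleton (α : Fin k × Bool) :
    wordProd k F [α] = sym k F α := by simp

def revInv (l : List (Fin k × Bool)) : List (Fin k × Bool) := (l.map ii).reverse

@[simp] lemma revInv_length (l : List (Fin k × Bool)) : (revInv l).length = l.length := by
  simp [revInv]

@[simp] lemma revInv_revInv (l : List (Fin k × Bool)) : revInv (revInv l) = l := by
  induction l with
  | nil => rfl
  | cons a l ih =>
    have h1 : revInv (a :: l) = revInv l ++ [ii a] := by simp [revInv]
    rw [h1]
    have h2 : revInv (revInv l ++ [ii a]) = ii (ii a) :: revInv (revInv l) := by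
      simp [revInv]
    rw [h2, ih, ii_ii]

lemma revInv_cons (a : Fin k × Bool) (l : List (Fin k × Bool)) :
    revInv (a :: l) = revInv l ++ [ii a] := by simp [revInv]

lemma wordProd_revInv (l : List (Fin k × Bool)) :
    wordProd k F (revInv l) = (wordProd k F l)⁻¹ := by
  induction l with
  | nil => simp [revInv]
  | cons a l ih =>
    rw [revInv_cons, wordProd_append, ih, wordProd_singleton, sym_ii, wordProd_cons,
      mul_inv_rev]


/-! ### existence of representing words, length basics -/

lemma exists_word (x : Grp k F) : ∃ l, wordProd k F l = x := by
  refine QuotientGroup.induction_on x ?_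
  intro z
  refine FreeGroup.induction_on z ?_ ?_ ?_ ?_
  · exact ⟨[], rfl⟩
  · intro i; exact ⟨[(i, true)], by simp [sym, gen, PresentedGroup.of]; rfl⟩
  · rintro i -
    exact ⟨[(i, false)], by simp [sym, gen, PresentedGroup.of]; rfl⟩
  · rintro a b ⟨la, ha⟩ ⟨lb, hb⟩
    exact ⟨la ++ lb, by rw [wordProd_append, ha, hb]; rfl⟩

lemma lenSet_nonempty (x : Grp k F) :
    {n | ∃ l : List (Fin k × Bool), wordProd k F l = x ∧ l.length = n}.Nonempty := by
  obtain ⟨l, hl⟩ := exists_word x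
  exact ⟨l.length, l, hl, rfl⟩

lemma exists_minWord (x : Grp k F) : ∃ l, wordProd k F l = x ∧ l.length = len x :=
  Nat.sInf_mem (lenSet_nonempty x)

lemma len_le_length {l : List (Fin k × Bool)} {x : Grp k F} (h : wordProd k F l = x) :
    len x ≤ l.length :=
  Nat.sInf_le ⟨l, h, rfl⟩

@[simp] lemma len_one : len (1 : Grp k F) = 0 :=
  Nat.le_zero.mp (len_le_length (wordProd_nil))

lemma len_eq_zero_iff {x : Grp k F} : len x = 0 ↔ x = 1 := by
  constructor
  · intro h
    obtain ⟨l, hl, hlen⟩ := exists_minWord x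
    rw [h] at hlen
    rw [List.length_eq_zero_iff] at hlen
    rw [hlen] at hl
    simpa using hl.symm
  · rintro rfl; exact len_one

lemma len_mul_le (x y : Grp k F) : len (x * y) ≤ len x + len y := by
  obtain ⟨lx, hx, hlx⟩ := exists_minWord x
  obtain ⟨ly, hy, hly⟩ := exists_minWord y
  have : wordProd k F (lx ++ ly) = x * y := by rw [wordProd_append, hx, hy]
  calc len (x * y) ≤ (lx ++ ly).length := len_le_length this
    _ = len x + len y := by simp [hlx, hly]

lemma len_inv_le (x : Grp k F) : len x⁻¹ ≤ len x := by
  obtain ⟨lx, hx, hlx⟩ := exists_minWord x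
  have : wordProd k F (revInv lx) = x⁻¹ := by rw [wordProd_revInv, hx]
  calc len x⁻¹ ≤ (revInv lx).length := len_le_length this
    _ = len x := by simp [hlx]

@[simp] lemma len_inv (x : Grp k F) : len x⁻¹ = len x :=
  le_antisymm (len_inv_le x) (by simpa using len_inv_le x⁻¹)

/-! ### parity -/

noncomputable def hom2 : Grp k F →* Multiplicative (ZMod 2) :=
  PresentedGroup.toGroup (f := fun _ => Multiplicative.ofAdd (1 : ZMod 2)) (by
    rintro r ⟨i, j, -, -, rfl⟩
    simp only [map_mul, map_inv, FreeGroup.lift_apply_of]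
    group)

lemma hom2_sym (α : Fin k × Bool) : hom2 (sym k F α) = Multiplicative.ofAdd (1 : ZMod 2) := by
  rcases α with ⟨i, b⟩
  have h : hom2 (gen k F i) = Multiplicative.ofAdd (1 : ZMod 2) :=
    PresentedGroup.toGroup.of _
  cases b <;> simp [sym, h]
  rw [← ofAdd_neg]
  norm_num
  decide

lemma hom2_wordProd (l : List (Fin k × Bool)) :
    hom2 (wordProd k F l) = Multiplicative.ofAdd (l.length : ZMod 2) := by
  induction l with
  | nil => simp
  | cons a l ih =>
    rw [wordProd_cons, map_mul, hom2_sym, ih]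
    rw [← ofAdd_add]
    congr 1
    simp [add_comm]

lemma hom2_len (x : Grp k F) : hom2 x = Multiplicative.ofAdd ((len x : ZMod 2)) := by
  obtain ⟨l, hl, hlen⟩ := exists_minWord x
  subst hl
  rw [hom2_wordProd, hlen]

lemma len_mul_sym_ne (x : Grp k F) (α : Fin k × Bool) : len (x * sym k F α) ≠ len x := by
  intro h
  have h1 := hom2_len (F := F) (x * sym k F α)
  rw [map_mul, hom2_sym, hom2_len, h] at h1
  have h2 : (len x : ZMod 2) + 1 = (len x : ZMod 2) := by
    have := congrArg Multiplicative.toAdd h1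
    simpa using this
  rw [add_eq_left] at h2
  exact one_ne_zero h2

lemma len_sym (α : Fin k × Bool) : len (sym k F α) = 1 := by
  have h1 : len (sym k F α) ≤ 1 := by
    simpa using len_le_length (wordProd_singleton (F := F) α)
  have h0 : sym k F α ≠ 1 := by
    intro h
    have h2 := hom2_sym (F := F) α
    rw [h, map_one] at h2
    have h3 : (0 : ZMod 2) = 1 := by
      have := congrArg Multiplicative.toAdd h2
      simpa using this
    exact one_ne_zero h3.symm
  rcases Nat.le_one_iff_eq_zero_or_eq_one.mp h1 with h | h
  · exact absurd (len_eq_zero_iff.mp h) h0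
  · exact h


/-! ### the prefix order: basic properties -/

lemma le_rfl' (x : Grp k F) : le x x := by
  unfold le; simp

lemma le_one_left (x : Grp k F) : le 1 x := by
  unfold le; simp

lemma len_mono {x y : Grp k F} (h : le x y) : len x ≤ len y := by
  unfold le at h; omega

lemma le_trans' {x y z : Grp k F} (h1 : le x y) (h2 : le y z) : le x z := by
  unfold le at *
  have e1 : x⁻¹ * z = (x⁻¹ * y) * (y⁻¹ * z) := by group
  have h3 : len (x⁻¹ * z) ≤ len (x⁻¹ * y) + len (y⁻¹ * z) := by
    rw [e1]; exact len_mul_le _ _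
  have h4 : len z ≤ len x + len (x⁻¹ * z) := by
    have e2 : z = x * (x⁻¹ * z) := by group
    calc len z = len (x * (x⁻¹ * z)) := by rw [← e2]
      _ ≤ len x + len (x⁻¹ * z) := len_mul_le _ _
  omega

lemma le_antisymm' {x y : Grp k F} (h1 : le x y) (h2 : le y x) : x = y := by
  unfold le at *
  have h3 : len (x⁻¹ * y) = 0 := by omega
  have h4 : x⁻¹ * y = 1 := len_eq_zero_iff.mp h3
  rw [inv_mul_eq_one] at h4
  exact h4

lemma eq_of_le_of_len_le {x y : Grp k F} (h : le x y) (h2 : len y ≤ len x) : x = y := by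
  have h3 : len (x⁻¹ * y) = 0 := by unfold le at h; omega
  have h4 := len_eq_zero_iff.mp h3
  rw [inv_mul_eq_one] at h4
  exact h4

lemma len_sub_of_le {x y : Grp k F} (h : le x y) : len (x⁻¹ * y) = len y - len x := by
  unfold le at h; omega

/-! ### first letters -/

def FL (α : Fin k × Bool) (x : Grp k F) : Prop := le (sym k F α) x

lemma len_ge_aux (α : Fin k × Bool) (x : Grp k F) :
    len x ≤ len ((sym k F α)⁻¹ * x) + 1 := by
  have e : x = sym k F α * ((sym k F α)⁻¹ * x) := by group
  calc len x = len (sym k F α * ((sym k F α)⁻¹ * x)) := by rw [← e]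
    _ ≤ 1 + len ((sym k F α)⁻¹ * x) := by
        have := len_mul_le (sym k F α) ((sym k F α)⁻¹ * x)
        rwa [len_sym] at this
    _ = len ((sym k F α)⁻¹ * x) + 1 := by omega

lemma FL_iff {α : Fin k × Bool} {x : Grp k F} :
    FL α x ↔ len x = len ((sym k F α)⁻¹ * x) + 1 := by
  unfold FL le
  rw [len_sym]
  omega

lemma FL_of_le {α : Fin k × Bool} {x : Grp k F}
    (h : len ((sym k F α)⁻¹ * x) + 1 ≤ len x) : FL α x := by
  rw [FL_iff]
  have := len_ge_aux α x
  omega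

lemma FL.trans {α : Fin k × Bool} {x y : Grp k F} (h : FL α x) (h2 : le x y) : FL α y :=
  le_trans' h h2

lemma commute_sym_wordProd {α : Fin k × Bool} {p : List (Fin k × Bool)}
    (h : ∀ β ∈ p, Cm F α β) : Commute (sym k F α) (wordProd k F p) := by
  induction p with
  | nil => simp [Commute.one_right]
  | cons b t ih =>
    rw [wordProd_cons]
    exact (commute_sym (h b (by simp))).mul_right (ih fun β hβ => h β (by simp [hβ]))

lemma FL_of_word {α : Fin k × Bool} {x : Grp k F} {t : List (Fin k × Bool)}
    (h : wordProd k F (α :: t) = x) (hlen : (α :: t).length = len x) : FL α x := by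
  apply FL_of_le
  have : (sym k F α)⁻¹ * x = wordProd k F t := by
    rw [← h, wordProd_cons]; group
  rw [this]
  have := len_le_length (rfl : wordProd k F t = wordProd k F t)
  simp at hlen
  omega

lemma FL.exists_word {α : Fin k × Bool} {x : Grp k F} (h : FL α x) :
    ∃ t, wordProd k F (α :: t) = x ∧ (α :: t).length = len x := by
  obtain ⟨t, ht, hlen⟩ := exists_minWord ((sym k F α)⁻¹ * x)
  refine ⟨t, ?_, ?_⟩
  · rw [wordProd_cons, ht]; group
  · simp [hlen]
    rw [FL_iff] at h
    omega

lemma FL_head {x : Grp k F} (h : x ≠ 1) : ∃ α, FL α x := by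
  obtain ⟨l, hl, hlen⟩ := exists_minWord x
  cases l with
  | nil => exact absurd (by simpa using hl.symm) h
  | cons a t => exact ⟨a, FL_of_word hl hlen⟩

lemma FL_front_movable {α : Fin k × Bool} {x : Grp k F} {p q : List (Fin k × Bool)}
    (hl : wordProd k F (p ++ α :: q) = x) (hlen : (p ++ α :: q).length = len x)
    (hcom : ∀ β ∈ p, Cm F α β) : FL α x := by
  apply FL_of_le
  have hc := commute_sym_wordProd (F := F) hcom
  have e : (sym k F α)⁻¹ * x = wordProd k F (p ++ q) := by
    rw [← hl, wordProd_append, wordProd_cons, wordProd_append]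
    rw [← mul_assoc, hc.inv_left.eq]
    group
  rw [e]
  have h2 := len_le_length (rfl : wordProd k F (p ++ q) = wordProd k F (p ++ q))
  simp at hlen h2 ⊢
  omega

/-! ### arithmetic cancellation lemmas -/

lemma le_cancel_left {α : Fin k × Bool} {w x : Grp k F} (hα : FL α w) (h : le w x) :
    le ((sym k F α)⁻¹ * w) ((sym k F α)⁻¹ * x) := by
  have hx : FL α x := hα.trans h
  rw [FL_iff] at hα hx
  unfold le at h ⊢
  have e : ((sym k F α)⁻¹ * w)⁻¹ * ((sym k F α)⁻¹ * x) = w⁻¹ * x := by group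
  rw [e]
  omega

lemma le_mul_left {α : Fin k × Bool} {j w : Grp k F} (hα : FL α w)
    (h : le j ((sym k F α)⁻¹ * w)) :
    le (sym k F α * j) w ∧ len (sym k F α * j) = len j + 1 := by
  rw [FL_iff] at hα
  unfold le at h ⊢
  have e : (sym k F α * j)⁻¹ * w = j⁻¹ * ((sym k F α)⁻¹ * w) := by group
  have h1 : len (sym k F α * j) ≤ 1 + len j := by
    have := len_mul_le (sym k F α) j
    rwa [len_sym] at this
  have h2 : len w ≤ len (sym k F α * j) + len (j⁻¹ * ((sym k F α)⁻¹ * w)) := by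
    have e2 : w = (sym k F α * j) * (j⁻¹ * ((sym k F α)⁻¹ * w)) := by group
    calc len w = len ((sym k F α * j) * (j⁻¹ * ((sym k F α)⁻¹ * w))) := by rw [← e2]
      _ ≤ _ := len_mul_le _ _
  rw [e]
  omega

lemma le_mul_right {γ : Fin k × Bool} {m x : Grp k F} (h : le m x)
    (hγ : FL γ (m⁻¹ * x)) :
    le (m * sym k F γ) x ∧ len (m * sym k F γ) = len m + 1 := by
  rw [FL_iff] at hγ
  unfold le at h ⊢
  have e : (m * sym k F γ)⁻¹ * x = (sym k F γ)⁻¹ * (m⁻¹ * x) := by group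
  have h1 : len (m * sym k F γ) ≤ len m + 1 := by
    have := len_mul_le m (sym k F γ)
    rwa [len_sym] at this
  have h2 : len x ≤ len (m * sym k F γ) + len ((sym k F γ)⁻¹ * (m⁻¹ * x)) := by
    have e2 : x = (m * sym k F γ) * ((sym k F γ)⁻¹ * (m⁻¹ * x)) := by group
    calc len x = len ((m * sym k F γ) * ((sym k F γ)⁻¹ * (m⁻¹ * x))) := by rw [← e2]
      _ ≤ _ := len_mul_le _ _
  rw [e]
  omega

lemma le_of_cancel {β : Fin k × Bool} {w m : Grp k F} (hw : FL β w) (hm : FL β m)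
    (h : le ((sym k F β)⁻¹ * w) ((sym k F β)⁻¹ * m)) : le w m := by
  rw [FL_iff] at hw hm
  unfold le at h ⊢
  have e : ((sym k F β)⁻¹ * w)⁻¹ * ((sym k F β)⁻¹ * m) = w⁻¹ * m := by group
  rw [e] at h
  omega

lemma FL_mul_of_commute {α β : Fin k × Bool} {m : Grp k F}
    (hc : Commute (sym k F α) (sym k F β)) (hβ : FL β m)
    (hlen : len (sym k F α * m) = len m + 1) : FL β (sym k F α * m) := by
  apply FL_of_le
  rw [FL_iff] at hβ
  have e : (sym k F β)⁻¹ * (sym k F α * m) = sym k F α * ((sym k F β)⁻¹ * m) := by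
    rw [← mul_assoc, ← hc.inv_right.eq, mul_assoc]
  rw [e]
  have h1 : len (sym k F α * ((sym k F β)⁻¹ * m)) ≤ 1 + len ((sym k F β)⁻¹ * m) := by
    have := len_mul_le (sym k F α) ((sym k F β)⁻¹ * m)
    rwa [len_sym] at this
  omega


/-! ### patterns and reduced words -/

def allCm (F : Set (Sym2 (Fin k))) (α : Fin k × Bool) (p : List (Fin k × Bool)) : Prop :=
  ∀ β ∈ p, Cm F α β

def FC (F : Set (Sym2 (Fin k))) (α : Fin k × Bool) (l : List (Fin k × Bool)) : Prop :=
  ∃ p q, l = p ++ ii α :: q ∧ allCm F α p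

def HasPattern (F : Set (Sym2 (Fin k))) (l : List (Fin k × Bool)) : Prop :=
  ∃ a γ b c, l = a ++ γ :: (b ++ ii γ :: c) ∧ allCm F γ b

def Red (F : Set (Sym2 (Fin k))) (l : List (Fin k × Bool)) : Prop := ¬ HasPattern F l

lemma allCm_nil {α : Fin k × Bool} : allCm F α [] := fun β h => absurd h List.not_mem_nil

lemma allCm_cons {α β : Fin k × Bool} {p : List (Fin k × Bool)} :
    allCm F α (β :: p) ↔ Cm F α β ∧ allCm F α p := by
  constructor
  · intro h; exact ⟨h β (by simp), fun δ hδ => h δ (by simp [hδ])⟩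
  · rintro ⟨h1, h2⟩ δ hδ
    rcases List.mem_cons.mp hδ with rfl | hδ
    · exact h1
    · exact h2 δ hδ

lemma allCm_append {α : Fin k × Bool} {p q : List (Fin k × Bool)} :
    allCm F α (p ++ q) ↔ allCm F α p ∧ allCm F α q := by
  constructor
  · intro h
    exact ⟨fun δ hδ => h δ (by simp [hδ]), fun δ hδ => h δ (by simp [hδ])⟩
  · rintro ⟨h1, h2⟩ δ hδ
    rcases List.mem_append.mp hδ with hδ | hδ
    · exact h1 δ hδ
    · exact h2 δ hδ

lemma fc_nil {α : Fin k × Bool} : ¬ FC F α [] := by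
  rintro ⟨p, q, h, -⟩
  simp at h

lemma fc_cons {α β : Fin k × Bool} {t : List (Fin k × Bool)} :
    FC F α (β :: t) ↔ β = ii α ∨ (Cm F α β ∧ FC F α t) := by
  constructor
  · rintro ⟨p, q, h, hp⟩
    cases p with
    | nil =>
      simp at h
      exact Or.inl h.1
    | cons p0 p' =>
      simp at h
      right
      rw [allCm_cons] at hp
      exact ⟨h.1 ▸ hp.1, p', q, h.2, hp.2⟩
  · rintro (rfl | ⟨h1, p, q, rfl, hp⟩)
    · exact ⟨[], t, rfl, allCm_nil⟩
    · exact ⟨β :: p, q, rfl, allCm_cons.mpr ⟨h1, hp⟩⟩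

lemma hasPattern_nil : ¬ HasPattern F [] := by
  rintro ⟨a, γ, b, c, h, -⟩
  simp at h

lemma hasPattern_cons {β : Fin k × Bool} {t : List (Fin k × Bool)} :
    HasPattern F (β :: t) ↔ HasPattern F t ∨ FC F β t := by
  constructor
  · rintro ⟨a, γ, b, c, h, hb⟩
    cases a with
    | nil =>
      simp at h
      exact Or.inr ⟨b, c, by rw [h.1, h.2], h.1 ▸ hb⟩
    | cons a0 a' =>
      simp at h
      exact Or.inl ⟨a', γ, b, c, h.2, hb⟩
  · rintro (⟨a, γ, b, c, rfl, hb⟩ | ⟨p, q, rfl, hp⟩)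
    · exact ⟨β :: a, γ, b, c, rfl, hb⟩
    · exact ⟨[], β, p, q, rfl, hp⟩

lemma red_nil : Red F ([] : List (Fin k × Bool)) := hasPattern_nil

lemma red_cons {β : Fin k × Bool} {t : List (Fin k × Bool)} :
    Red F (β :: t) ↔ Red F t ∧ ¬ FC F β t := by
  unfold Red
  rw [hasPattern_cons]
  tauto

lemma red_tail {β : Fin k × Bool} {t : List (Fin k × Bool)} (h : Red F (β :: t)) :
    Red F t := (red_cons.mp h).1

lemma hasPattern_append_left {u v : List (Fin k × Bool)} (h : HasPattern F u) :
    HasPattern F (u ++ v) := by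
  obtain ⟨a, γ, b, c, rfl, hb⟩ := h
  exact ⟨a, γ, b, c ++ v, by simp, hb⟩

lemma hasPattern_append_right {u v : List (Fin k × Bool)} (h : HasPattern F v) :
    HasPattern F (u ++ v) := by
  obtain ⟨a, γ, b, c, rfl, hb⟩ := h
  exact ⟨u ++ a, γ, b, c, by simp, hb⟩

lemma red_append_left {u v : List (Fin k × Bool)} (h : Red F (u ++ v)) : Red F u :=
  fun hp => h (hasPattern_append_left hp)

lemma red_append_right {u v : List (Fin k × Bool)} (h : Red F (u ++ v)) : Red F v :=
  fun hp => h (hasPattern_append_right hp)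

/-! ### shortening a word with a pattern -/

lemma wordProd_pattern {a b c : List (Fin k × Bool)} {γ : Fin k × Bool}
    (hb : allCm F γ b) :
    wordProd k F (a ++ γ :: (b ++ ii γ :: c)) = wordProd k F (a ++ (b ++ c)) := by
  have hc := commute_sym_wordProd (F := F) (p := b) hb
  simp only [wordProd_append, wordProd_cons, sym_ii]
  rw [← mul_assoc (sym k F γ), hc.eq]
  group

lemma shorten {l : List (Fin k × Bool)} (h : HasPattern F l) :
    ∃ l', wordProd k F l' = wordProd k F l ∧ l'.length + 2 = l.length := by
  obtain ⟨a, γ, b, c, rfl, hb⟩ := h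
  refine ⟨a ++ (b ++ c), (wordProd_pattern hb).symm, by simp; omega⟩

lemma red_of_geodesic {l : List (Fin k × Bool)} (hlen : l.length = len (wordProd k F l)) :
    Red F l := by
  intro hp
  obtain ⟨l', hl', hlen'⟩ := shorten hp
  have := len_le_length hl'
  omega

/-! ### insertion lemmas -/

lemma fc_insert {α b : Fin k × Bool} {p q : List (Fin k × Bool)}
    (hab : Cm F b α) (h : FC F b (p ++ q)) : FC F b (p ++ ii α :: q) := by
  induction p with
  | nil =>
    simp only [List.nil_append] at h ⊢
    rw [fc_cons]
    right
    refine ⟨by simpa using hab, h⟩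
  | cons c p ih =>
    simp only [List.cons_append] at h ⊢
    rw [fc_cons] at h ⊢
    rcases h with h | ⟨h1, h2⟩
    · exact Or.inl h
    · exact Or.inr ⟨h1, ih h2⟩

lemma hasPattern_insert {α : Fin k × Bool} {p q : List (Fin k × Bool)}
    (hp : allCm F α p) (h : HasPattern F (p ++ q)) : HasPattern F (p ++ ii α :: q) := by
  induction p with
  | nil =>
    simp only [List.nil_append] at h ⊢
    rw [hasPattern_cons]
    exact Or.inl h
  | cons b p ih =>
    rw [allCm_cons] at hp
    simp only [List.cons_append] at h ⊢
    rw [hasPattern_cons] at h ⊢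
    rcases h with h | h
    · exact Or.inl (ih hp.2 h)
    · exact Or.inr (fc_insert hp.1.symm h)

lemma red_del {α : Fin k × Bool} {p q : List (Fin k × Bool)}
    (h : Red F (p ++ ii α :: q)) (hp : allCm F α p) : Red F (p ++ q) :=
  fun hpat => h (hasPattern_insert hp hpat)

/-! ### revInv and patterns -/

lemma revInv_append (u v : List (Fin k × Bool)) :
    revInv (u ++ v) = revInv v ++ revInv u := by
  simp [revInv]

lemma allCm_revInv {γ : Fin k × Bool} {b : List (Fin k × Bool)} (h : allCm F γ b) :
    allCm F γ (revInv b) := by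
  intro δ hδ
  rw [revInv, List.mem_reverse, List.mem_map] at hδ
  obtain ⟨δ', hδ', rfl⟩ := hδ
  exact cm_ii_right.mpr (h δ' hδ')

lemma hasPattern_revInv {l : List (Fin k × Bool)} (h : HasPattern F l) :
    HasPattern F (revInv l) := by
  obtain ⟨a, γ, b, c, rfl, hb⟩ := h
  refine ⟨revInv c, γ, revInv b, revInv a, ?_, allCm_revInv hb⟩
  simp only [revInv_append, revInv_cons, ii_ii]
  simp

lemma red_revInv {l : List (Fin k × Bool)} (h : Red F l) : Red F (revInv l) := by
  intro hp
  exact h (by simpa using hasPattern_revInv hp)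


/-! ### the cancellation function -/

open Classical in
noncomputable def ican (F : Set (Sym2 (Fin k))) (α : Fin k × Bool) :
    List (Fin k × Bool) → Option (List (Fin k × Bool))
  | [] => none
  | β :: t => if β = ii α then some t
      else if Cm F α β then (ican F α t).map (β :: ·) else none

@[simp] lemma ican_nil {α : Fin k × Bool} : ican F α [] = none := by simp [ican]

lemma ican_cons_pos {α β : Fin k × Bool} {t : List (Fin k × Bool)} (h : β = ii α) :
    ican F α (β :: t) = some t := by simp [ican, h]

lemma ican_cons_cm {α β : Fin k × Bool} {t : List (Fin k × Bool)} (h1 : β ≠ ii α)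
    (h2 : Cm F α β) : ican F α (β :: t) = (ican F α t).map (β :: ·) := by
  simp [ican, h1, h2]

lemma ican_cons_neg {α β : Fin k × Bool} {t : List (Fin k × Bool)} (h1 : β ≠ ii α)
    (h2 : ¬ Cm F α β) : ican F α (β :: t) = none := by
  simp [ican, h1, h2]

lemma ican_of_fc {α : Fin k × Bool} {p q : List (Fin k × Bool)} (hp : allCm F α p) :
    ican F α (p ++ ii α :: q) = some (p ++ q) := by
  induction p with
  | nil => simpa using ican_cons_pos rfl
  | cons b t ih =>
    rw [allCm_cons] at hp
    simp only [List.cons_append]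
    rw [ican_cons_cm (ne_ii_of_cm hp.1) hp.1, ih hp.2]
    rfl

lemma ican_some {α : Fin k × Bool} {l r : List (Fin k × Bool)}
    (h : ican F α l = some r) :
    ∃ p q, l = p ++ ii α :: q ∧ allCm F α p ∧ r = p ++ q := by
  induction l generalizing r with
  | nil => simp at h
  | cons β t ih =>
    by_cases h1 : β = ii α
    · rw [ican_cons_pos h1] at h
      obtain rfl := Option.some_injective _ h
      exact ⟨[], t, by rw [h1]; rfl, allCm_nil, rfl⟩
    · by_cases h2 : Cm F α β
      · rw [ican_cons_cm h1 h2] at h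
        rcases Option.map_eq_some_iff.mp h with ⟨r', hr', rfl⟩
        obtain ⟨p, q, rfl, hp, rfl⟩ := ih hr'
        exact ⟨β :: p, q, rfl, allCm_cons.mpr ⟨h2, hp⟩, rfl⟩
      · rw [ican_cons_neg h1 h2] at h
        simp at h

lemma ican_none_iff {α : Fin k × Bool} {l : List (Fin k × Bool)} :
    ican F α l = none ↔ ¬ FC F α l := by
  constructor
  · rintro h ⟨p, q, rfl, hp⟩
    rw [ican_of_fc hp] at h
    simp at h
  · intro h
    rcases h2 : ican F α l with - | r
    · rfl
    · obtain ⟨p, q, rfl, hp, -⟩ := ican_some h2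
      exact absurd ⟨p, q, rfl, hp⟩ h

/-! ### the action on words -/

noncomputable def act (F : Set (Sym2 (Fin k))) (α : Fin k × Bool)
    (l : List (Fin k × Bool)) : List (Fin k × Bool) :=
  (ican F α l).getD (α :: l)

lemma act_of_none {α : Fin k × Bool} {l : List (Fin k × Bool)} (h : ican F α l = none) :
    act F α l = α :: l := by simp [act, h]

lemma act_of_some {α : Fin k × Bool} {l r : List (Fin k × Bool)} (h : ican F α l = some r) :
    act F α l = r := by simp [act, h]

lemma wordProd_act (α : Fin k × Bool) (l : List (Fin k × Bool)) :
    wordProd k F (act F α l) = sym k F α * wordProd k F l := by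
  rcases h : ican F α l with - | r
  · rw [act_of_none h, wordProd_cons]
  · rw [act_of_some h]
    obtain ⟨p, q, rfl, hp, rfl⟩ := ican_some h
    have hc := commute_sym_wordProd (F := F) hp
    simp only [wordProd_append, wordProd_cons, sym_ii]
    rw [← mul_assoc, ← mul_assoc, hc.eq]
    group

lemma length_act_le (α : Fin k × Bool) (l : List (Fin k × Bool)) :
    (act F α l).length ≤ l.length + 1 := by
  rcases h : ican F α l with - | r
  · rw [act_of_none h]; simp
  · rw [act_of_some h]
    obtain ⟨p, q, rfl, -, rfl⟩ := ican_some h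
    simp
    omega

lemma red_act {α : Fin k × Bool} {l : List (Fin k × Bool)} (h : Red F l) :
    Red F (act F α l) := by
  rcases h2 : ican F α l with - | r
  · rw [act_of_none h2]
    rw [red_cons]
    exact ⟨h, ican_none_iff.mp h2⟩
  · rw [act_of_some h2]
    obtain ⟨p, q, rfl, hp, rfl⟩ := ican_some h2
    exact red_del h hp

lemma act_cons_pos {α β : Fin k × Bool} {t : List (Fin k × Bool)} (h : β = ii α) :
    act F α (β :: t) = t := act_of_some (ican_cons_pos h)

/-! ### swaps of adjacent commuting letters -/

def Step (F : Set (Sym2 (Fin k))) (l l' : List (Fin k × Bool)) : Prop :=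
  ∃ p x y q, Cm F x y ∧ l = p ++ x :: y :: q ∧ l' = p ++ y :: x :: q

lemma Step.symm' {l l' : List (Fin k × Bool)} (h : Step F l l') : Step F l' l := by
  obtain ⟨p, x, y, q, hc, rfl, rfl⟩ := h
  exact ⟨p, y, x, q, hc.symm, rfl, rfl⟩

lemma Step.length {l l' : List (Fin k × Bool)} (h : Step F l l') : l.length = l'.length := by
  obtain ⟨p, x, y, q, hc, rfl, rfl⟩ := h
  simp

lemma Step.wordProd {l l' : List (Fin k × Bool)} (h : Step F l l') :
    wordProd k F l = wordProd k F l' := by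
  obtain ⟨p, x, y, q, hc, rfl, rfl⟩ := h
  simp only [wordProd_append, wordProd_cons]
  rw [← mul_assoc, ← mul_assoc, mul_assoc (GraphGroupPaper.wordProd k F p) (sym k F x)
    (sym k F y), (commute_sym hc).eq]
  group

lemma Step.fc {α : Fin k × Bool} {l l' : List (Fin k × Bool)} (h : Step F l l')
    (hfc : FC F α l) : FC F α l' := by
  obtain ⟨p, x, y, q, hc, rfl, rfl⟩ := h
  induction p with
  | nil =>
    simp only [List.nil_append] at hfc ⊢
    rw [fc_cons, fc_cons] at hfc ⊢
    rcases hfc with rfl | ⟨h1, hfc⟩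
    · exact Or.inr ⟨cm_ii_left.mp hc, Or.inl rfl⟩
    · rcases hfc with rfl | ⟨h2, hfc⟩
      · exact Or.inl rfl
      · exact Or.inr ⟨h2, Or.inr ⟨h1, hfc⟩⟩
  | cons c p ih =>
    rw [List.cons_append, fc_cons] at hfc ⊢
    rcases hfc with rfl | ⟨h1, hfc⟩
    · exact Or.inl rfl
    · exact Or.inr ⟨h1, ih hfc⟩

lemma Step.hasPattern {l l' : List (Fin k × Bool)} (h : Step F l l')
    (hp : HasPattern F l) : HasPattern F l' := by
  obtain ⟨p, x, y, q, hc, rfl, rfl⟩ := h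
  induction p with
  | nil =>
    simp only [List.nil_append] at hp ⊢
    rw [hasPattern_cons, hasPattern_cons] at hp ⊢
    rcases hp with (hp | hfc) | hfc
    · exact Or.inl (Or.inl hp)
    · exact Or.inr (fc_cons.mpr (Or.inr ⟨hc.symm, hfc⟩))
    · rw [fc_cons] at hfc
      rcases hfc with heq | ⟨h1, hfc⟩
      · exact absurd heq (ne_ii_of_cm hc)
      · exact Or.inl (Or.inr hfc)
  | cons c p ih =>
    rw [List.cons_append, hasPattern_cons] at hp ⊢
    rcases hp with hp | hfc
    · exact Or.inl (ih hp)
    · exact Or.inr (Step.fc ⟨p, x, y, q, hc, rfl, rfl⟩ hfc)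

lemma Step.red {l l' : List (Fin k × Bool)} (h : Step F l l') (hr : Red F l) : Red F l' :=
  fun hp => hr (h.symm'.hasPattern hp)


/-! ### traces -/

def Trace (k : ℕ) (F : Set (Sym2 (Fin k))) := Quot (Step F)

def mkT (l : List (Fin k × Bool)) : Trace k F := Quot.mk _ l

lemma mkT_step {l l' : List (Fin k × Bool)} (h : Step F l l') :
    (mkT l : Trace k F) = mkT l' := Quot.sound h

noncomputable def lenT : Trace k F → ℕ := Quot.lift List.length (fun _ _ h => h.length)

@[simp] lemma lenT_mkT (l : List (Fin k × Bool)) : lenT (mkT l : Trace k F) = l.length := rfl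

noncomputable def prodT : Trace k F → Grp k F :=
  Quot.lift (wordProd k F) (fun _ _ h => h.wordProd)

@[simp] lemma prodT_mkT (l : List (Fin k × Bool)) :
    prodT (mkT l : Trace k F) = wordProd k F l := rfl

def RedT : Trace k F → Prop :=
  Quot.lift (Red F) (fun _ _ h => propext ⟨h.red, h.symm'.red⟩)

@[simp] lemma redT_mkT (l : List (Fin k × Bool)) : RedT (mkT l : Trace k F) ↔ Red F l :=
  Iff.rfl

def consT (c : Fin k × Bool) : Trace k F → Trace k F :=
  Quot.map (c :: ·) (fun a b h => by
    obtain ⟨p, x, y, q, hc, rfl, rfl⟩ := h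
    exact ⟨c :: p, x, y, q, hc, rfl, rfl⟩)

@[simp] lemma consT_mkT (c : Fin k × Bool) (l : List (Fin k × Bool)) :
    consT c (mkT l : Trace k F) = mkT (c :: l) := rfl

lemma mkT_bubble {x : Fin k × Bool} {q : List (Fin k × Bool)} :
    ∀ {p : List (Fin k × Bool)}, allCm F x p →
      (mkT (x :: (p ++ q)) : Trace k F) = mkT (p ++ x :: q) := by
  intro p
  induction p with
  | nil => intro _; rfl
  | cons b p ih =>
    intro hp
    rw [allCm_cons] at hp
    have h1 : (mkT (x :: b :: (p ++ q)) : Trace k F) = mkT (b :: x :: (p ++ q)) :=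
      mkT_step ⟨[], x, b, p ++ q, hp.1, rfl, rfl⟩
    have h2 : (mkT (x :: (p ++ q)) : Trace k F) = mkT (p ++ x :: q) := ih hp.2
    calc (mkT (x :: (b :: p ++ q)) : Trace k F) = mkT (b :: x :: (p ++ q)) := h1
      _ = consT b (mkT (x :: (p ++ q))) := rfl
      _ = consT b (mkT (p ++ x :: q)) := by rw [h2]
      _ = mkT (b :: p ++ x :: q) := rfl

/-! ### the action descends to traces -/

lemma act_step {α : Fin k × Bool} {l l' : List (Fin k × Bool)} (h : Step F l l') :
    (mkT (act F α l) : Trace k F) = mkT (act F α l') := by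
  obtain ⟨p, x, y, q, hc, rfl, rfl⟩ := h
  induction p with
  | nil =>
    simp only [List.nil_append]
    by_cases hx : x = ii α
    · have hy : y ≠ ii α := by
        intro hy
        rw [hx, hy] at hc
        exact not_cm_self _ hc
      have hcy : Cm F α y := cm_ii_left.mp (hx ▸ hc)
      rw [act_cons_pos hx,
        act_of_some (show ican F α (y :: x :: q) = some (y :: q) by
          rw [ican_cons_cm hy hcy, ican_cons_pos hx]; rfl)]
    · by_cases hy : y = ii α
      · have hcx : Cm F α x := cm_ii_left.mp (hy ▸ hc.symm)
        rw [act_of_some (show ican F α (x :: y :: q) = some (x :: q) by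
            rw [ican_cons_cm hx hcx, ican_cons_pos hy]; rfl),
          act_cons_pos hy]
      · by_cases hcx : Cm F α x
        · by_cases hcy : Cm F α y
          · rcases hq : ican F α q with - | r
            · rw [act_of_none (by rw [ican_cons_cm hx hcx, ican_cons_cm hy hcy, hq]; rfl),
                act_of_none (by rw [ican_cons_cm hy hcy, ican_cons_cm hx hcx, hq]; rfl)]
              exact mkT_step ⟨[α], x, y, q, hc, rfl, rfl⟩
            · rw [act_of_some (show ican F α (x :: y :: q) = some (x :: y :: r) by
                  rw [ican_cons_cm hx hcx, ican_cons_cm hy hcy, hq]; rfl),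
                act_of_some (show ican F α (y :: x :: q) = some (y :: x :: r) by
                  rw [ican_cons_cm hy hcy, ican_cons_cm hx hcx, hq]; rfl)]
              exact mkT_step ⟨[], x, y, r, hc, rfl, rfl⟩
          · rw [act_of_none (by rw [ican_cons_cm hx hcx, ican_cons_neg hy hcy]; rfl),
              act_of_none (ican_cons_neg hy hcy)]
            exact mkT_step ⟨[α], x, y, q, hc, rfl, rfl⟩
        · by_cases hcy : Cm F α y
          · rw [act_of_none (ican_cons_neg hx hcx),
              act_of_none (by rw [ican_cons_cm hy hcy, ican_cons_neg hx hcx]; rfl)]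
            exact mkT_step ⟨[α], x, y, q, hc, rfl, rfl⟩
          · rw [act_of_none (ican_cons_neg hx hcx), act_of_none (ican_cons_neg hy hcy)]
            exact mkT_step ⟨[α], x, y, q, hc, rfl, rfl⟩
  | cons c p ih =>
    simp only [List.cons_append] at ih ⊢
    by_cases hc1 : c = ii α
    · rw [act_cons_pos hc1, act_cons_pos hc1]
      exact mkT_step ⟨p, x, y, q, hc, rfl, rfl⟩
    · by_cases hc2 : Cm F α c
      · rcases h1 : ican F α (p ++ x :: y :: q) with - | r
        · have h2 : ican F α (p ++ y :: x :: q) = none := by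
            rw [ican_none_iff] at h1 ⊢
            intro hfc
            exact h1 (Step.fc ⟨p, y, x, q, hc.symm, rfl, rfl⟩ hfc)
          rw [act_of_none (by rw [ican_cons_cm hc1 hc2, h1]; rfl),
            act_of_none (by rw [ican_cons_cm hc1 hc2, h2]; rfl)]
          exact mkT_step ⟨α :: c :: p, x, y, q, hc, rfl, rfl⟩
        · have h2 : ∃ r', ican F α (p ++ y :: x :: q) = some r' := by
            rcases h2 : ican F α (p ++ y :: x :: q) with - | r'
            · rw [ican_none_iff] at h2
              obtain ⟨p₁, q₁, hd, hp₁⟩ := ican_some h1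
              exact absurd (Step.fc ⟨p, x, y, q, hc, rfl, rfl⟩ ⟨p₁, q₁, hd, hp₁.1⟩) h2
            · exact ⟨r', rfl⟩
          obtain ⟨r', h2⟩ := h2
          rw [act_of_some (show ican F α (c :: (p ++ x :: y :: q)) = some (c :: r) by
              rw [ican_cons_cm hc1 hc2, h1]; rfl),
            act_of_some (show ican F α (c :: (p ++ y :: x :: q)) = some (c :: r') by
              rw [ican_cons_cm hc1 hc2, h2]; rfl)]
          have hIH := ih
          rw [act_of_some h1, act_of_some h2] at hIH
          exact congrArg (consT c) hIH
      · rw [act_of_none (ican_cons_neg hc1 hc2), act_of_none (ican_cons_neg hc1 hc2)]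
        exact mkT_step ⟨α :: c :: p, x, y, q, hc, rfl, rfl⟩

noncomputable def actT (α : Fin k × Bool) : Trace k F → Trace k F :=
  Quot.lift (fun l => mkT (act F α l)) (fun _ _ h => act_step h)

@[simp] lemma actT_mkT (α : Fin k × Bool) (l : List (Fin k × Bool)) :
    actT α (mkT l : Trace k F) = mkT (act F α l) := rfl

lemma redT_actT {α : Fin k × Bool} {t : Trace k F} (h : RedT t) : RedT (actT α t) := by
  induction t using Quot.inductionOn with
  | _ l => exact red_act h

/-! ### inverse and commutation identities for the action -/

lemma act_act_inv {α : Fin k × Bool} {l : List (Fin k × Bool)} (hred : Red F l) :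
    (mkT (act F (ii α) (act F α l)) : Trace k F) = mkT l := by
  rcases h : ican F α l with - | r
  · rw [act_of_none h, act_cons_pos (by rw [ii_ii])]
  · obtain ⟨p, q, rfl, hp, rfl⟩ := ican_some h
    rw [act_of_some h]
    have hnone : ican F (ii α) (p ++ q) = none := by
      rw [ican_none_iff]
      rintro ⟨p₁, q₁, hdecomp, hp₁⟩
      rw [ii_ii] at hdecomp
      rcases List.append_eq_append_iff.mp hdecomp with ⟨a', ha1, ha2⟩ | ⟨c', hc1, hc2⟩
      · exact hred ⟨p, ii α, a', q₁, by rw [ha2, ii_ii], fun δ hδ =>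
          hp₁ δ (by rw [ha1]; simp [hδ])⟩
      · cases c' with
        | nil =>
          simp at hc2
          exact hred ⟨p, ii α, [], q₁, by rw [← hc2, ii_ii]; simp, allCm_nil⟩
        | cons c0 w =>
          rw [List.cons_append] at hc2
          injection hc2 with h5 h6
          have h7 : α ∈ p := by rw [hc1, ← h5]; simp
          exact not_cm_self α (hp α h7)
    rw [act_of_none hnone]
    exact mkT_bubble (fun δ hδ => (hp δ hδ : Cm F α δ))

lemma act_comm_core {α β : Fin k × Bool} {p r q' : List (Fin k × Bool)}
    (hc : Cm F α β) (hp : allCm F α p) (hr : allCm F β (p ++ ii α :: r)) :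
    act F β (act F α (p ++ ii α :: (r ++ ii β :: q'))) =
      act F α (act F β (p ++ ii α :: (r ++ ii β :: q'))) := by
  rw [allCm_append, allCm_cons] at hr
  have e1 : act F α (p ++ ii α :: (r ++ ii β :: q')) = p ++ (r ++ ii β :: q') :=
    act_of_some (ican_of_fc hp)
  have e2 : act F β (p ++ (r ++ ii β :: q')) = (p ++ r) ++ q' := by
    have : p ++ (r ++ ii β :: q') = (p ++ r) ++ ii β :: q' := by simp
    rw [this]
    exact act_of_some (ican_of_fc (allCm_append.mpr ⟨hr.1, hr.2.2⟩))
  have e3 : act F β (p ++ ii α :: (r ++ ii β :: q')) = (p ++ ii α :: r) ++ q' := by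
    have : p ++ ii α :: (r ++ ii β :: q') = (p ++ ii α :: r) ++ ii β :: q' := by simp
    rw [this]
    exact act_of_some (ican_of_fc (by
      rw [allCm_append, allCm_cons]
      exact ⟨hr.1, hr.2.1, hr.2.2⟩))
  have e4 : act F α ((p ++ ii α :: r) ++ q') = p ++ (r ++ q') := by
    have : (p ++ ii α :: r) ++ q' = p ++ ii α :: (r ++ q') := by simp
    rw [this]
    exact act_of_some (ican_of_fc hp)
  rw [e1, e2, e3, e4]
  simp

lemma act_comm_one {α β : Fin k × Bool} {l : List (Fin k × Bool)} (hc : Cm F α β)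
    (hfcα : FC F α l) (hnβ : ¬ FC F β l) :
    act F α (act F β l) = act F β (act F α l) := by
  obtain ⟨p, q, rfl, hp⟩ := hfcα
  have e1 : act F α (p ++ ii α :: q) = p ++ q := act_of_some (ican_of_fc hp)
  have e2 : act F β (p ++ ii α :: q) = β :: (p ++ ii α :: q) :=
    act_of_none (ican_none_iff.mpr hnβ)
  have e3 : act F β (p ++ q) = β :: (p ++ q) := by
    apply act_of_none
    rw [ican_none_iff]
    intro hfc
    exact hnβ (fc_insert hc.symm hfc)
  have e4 : act F α (β :: (p ++ ii α :: q)) = β :: (p ++ q) := by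
    apply act_of_some
    rw [ican_cons_cm (ne_ii_of_cm hc) hc, ican_of_fc hp]
    rfl
  rw [e1, e2, e3, e4]

lemma act_comm {α β : Fin k × Bool} {l : List (Fin k × Bool)} (hc : Cm F α β) :
    (mkT (act F α (act F β l)) : Trace k F) = mkT (act F β (act F α l)) := by
  have hne : ii α ≠ ii β := by
    intro h
    have h2 : α.1 = β.1 := by
      have := congrArg Prod.fst h
      simpa using this
    exact hc.1 h2
  by_cases hfcα : FC F α l
  · by_cases hfcβ : FC F β l
    · obtain ⟨p, q, rfl, hp⟩ := hfcα
      obtain ⟨p', q', hd', hp'⟩ := hfcβ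
      rcases List.append_eq_append_iff.mp hd' with ⟨a', ha1, ha2⟩ | ⟨c', hc1, hc2⟩
      · cases a' with
        | nil =>
          simp at ha2
          exact absurd ha2.1 hne
        | cons a0 w =>
          rw [List.cons_append] at ha2
          injection ha2 with h1 h2
          subst h1
          subst h2
          subst ha1
          rw [allCm_append] at hp'
          exact congrArg mkT (act_comm_core hc hp (allCm_append.mpr hp')).symm
      · cases c' with
        | nil =>
          simp at hc2
          exact absurd hc2.1.symm hne
        | cons c0 w =>
          rw [List.cons_append] at hc2
          injection hc2 with h1 h2
          subst h1
          subst h2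
          subst hc1
          rw [allCm_append] at hp
          simp only [List.append_assoc, List.cons_append]
          exact congrArg mkT (act_comm_core hc.symm hp' (allCm_append.mpr hp))
    · rw [act_comm_one hc hfcα hfcβ]
  · by_cases hfcβ : FC F β l
    · rw [act_comm_one hc.symm hfcβ hfcα]
    · have e1 : act F β l = β :: l := act_of_none (ican_none_iff.mpr hfcβ)
      have e2 : act F α l = α :: l := act_of_none (ican_none_iff.mpr hfcα)
      have e3 : act F α (β :: l) = α :: β :: l := by
        apply act_of_none
        rw [ican_cons_cm (ne_ii_of_cm hc) hc, ican_none_iff.mpr hfcα]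
        rfl
      have e4 : act F β (α :: l) = β :: α :: l := by
        apply act_of_none
        rw [ican_cons_cm (ne_ii_of_cm hc.symm) hc.symm, ican_none_iff.mpr hfcβ]
        rfl
      rw [e1, e2, e3, e4]
      exact mkT_step ⟨[], α, β, l, hc, rfl, rfl⟩


/-! ### the permutation representation and normal forms -/

def RS (k : ℕ) (F : Set (Sym2 (Fin k))) := {t : Trace k F // RedT t}

noncomputable def actS (α : Fin k × Bool) (s : RS k F) : RS k F :=
  ⟨actT α s.1, redT_actT s.2⟩

lemma actT_inv_actT {α : Fin k × Bool} {t : Trace k F} (h : RedT t) :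
    actT (ii α) (actT α t) = t := by
  induction t using Quot.inductionOn with
  | _ l => exact act_act_inv h

lemma actS_inv_actS {α : Fin k × Bool} (s : RS k F) : actS (ii α) (actS α s) = s :=
  Subtype.ext (actT_inv_actT s.2)

lemma actT_comm {α β : Fin k × Bool} (hc : Cm F α β) (t : Trace k F) :
    actT α (actT β t) = actT β (actT α t) := by
  induction t using Quot.inductionOn with
  | _ l => exact act_comm hc

noncomputable def eS (i : Fin k) : Equiv.Perm (RS k F) where
  toFun := actS (i, true)
  invFun := actS (i, false)
  left_inv := fun s => actS_inv_actS (α := (i, true)) s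
  right_inv := fun s => by
    have h := actS_inv_actS (α := (i, false)) (F := F) s
    simpa [ii] using h

lemma commute_eS {i j : Fin k} (hij : i ≠ j) (hF : s(i, j) ∉ F) :
    Commute (eS i : Equiv.Perm (RS k F)) (eS j) := by
  have hc : Cm F (i, true) (j, true) := ⟨hij, hF⟩
  ext s
  simp only [Equiv.Perm.mul_apply, eS, Equiv.coe_fn_mk]
  exact Subtype.ext (actT_comm hc s.1)

noncomputable def Phi : Grp k F →* Equiv.Perm (RS k F) :=
  PresentedGroup.toGroup (f := eS) (by
    rintro r ⟨i, j, hij, hF, rfl⟩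
    simp only [map_mul, map_inv, FreeGroup.lift_apply_of]
    rw [mul_inv_eq_one, mul_inv_eq_iff_eq_mul]
    exact commute_eS hij hF)

lemma Phi_gen (i : Fin k) : Phi (gen k F i) = eS i :=
  PresentedGroup.toGroup.of _

lemma Phi_sym_apply (α : Fin k × Bool) (s : RS k F) : Phi (sym k F α) s = actS α s := by
  rcases α with ⟨i, b⟩
  cases b
  · show Phi ((gen k F i)⁻¹) s = _
    rw [map_inv, Phi_gen]
    rfl
  · show Phi (gen k F i) s = _
    rw [Phi_gen]
    rfl

noncomputable def emptyS : RS k F := ⟨mkT [], red_nil⟩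

noncomputable def nf (x : Grp k F) : RS k F := Phi x emptyS

lemma nf_sym_mul (α : Fin k × Bool) (x : Grp k F) :
    nf (sym k F α * x) = actS α (nf x) := by
  unfold nf
  rw [map_mul, Equiv.Perm.mul_apply, Phi_sym_apply]

lemma prodT_actT (α : Fin k × Bool) (t : Trace k F) :
    prodT (actT α t) = sym k F α * prodT t := by
  induction t using Quot.inductionOn with
  | _ l => exact wordProd_act α l

lemma lenT_actT_le (α : Fin k × Bool) (t : Trace k F) :
    lenT (actT α t) ≤ lenT t + 1 := by
  induction t using Quot.inductionOn with
  | _ l => exact length_act_le α l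

lemma prodT_nf_word (l : List (Fin k × Bool)) :
    prodT (nf (wordProd k F l)).1 = wordProd k F l := by
  induction l with
  | nil =>
    show prodT (Phi 1 emptyS).1 = 1
    rw [map_one]
    rfl
  | cons a t ih =>
    rw [wordProd_cons, nf_sym_mul]
    show prodT (actT a (nf (wordProd k F t)).1) = _
    rw [prodT_actT, ih]

lemma prodT_nf (x : Grp k F) : prodT (nf x).1 = x := by
  obtain ⟨l, rfl⟩ := exists_word x
  exact prodT_nf_word l

lemma lenT_nf_word_le (l : List (Fin k × Bool)) :
    lenT (nf (wordProd k F l)).1 ≤ l.length := by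
  induction l with
  | nil =>
    show lenT (Phi 1 emptyS).1 ≤ 0
    rw [map_one]
    exact Nat.le_refl _
  | cons a t ih =>
    rw [wordProd_cons, nf_sym_mul]
    show lenT (actT a (nf (wordProd k F t)).1) ≤ _
    calc lenT (actT a (nf (wordProd k F t)).1) ≤ lenT (nf (wordProd k F t)).1 + 1 :=
          lenT_actT_le _ _
      _ ≤ t.length + 1 := by omega
      _ = (a :: t).length := by simp

lemma len_eq_lenT_nf (x : Grp k F) : len x = lenT (nf x).1 := by
  apply Nat.le_antisymm
  · obtain ⟨l, hl⟩ := Quot.exists_rep (nf x).1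
    have h2 : wordProd k F l = x := by
      have := prodT_nf x
      rw [← hl] at this
      exact this
    have h3 : lenT (nf x).1 = l.length := by rw [← hl]; rfl
    rw [h3]
    exact len_le_length h2
  · obtain ⟨l, hl, hlen⟩ := exists_minWord x
    calc lenT (nf x).1 = lenT (nf (wordProd k F l)).1 := by rw [hl]
      _ ≤ l.length := lenT_nf_word_le l
      _ = len x := hlen

lemma nf_red_word {l : List (Fin k × Bool)} (h : Red F l) :
    (nf (wordProd k F l)).1 = mkT l := by
  induction l with
  | nil =>
    show (Phi 1 emptyS).1 = _
    rw [map_one]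
    rfl
  | cons a t ih =>
    rw [wordProd_cons, nf_sym_mul]
    show actT a (nf (wordProd k F t)).1 = _
    rw [ih (red_tail h), actT_mkT]
    congr 1
    apply act_of_none
    rw [ican_none_iff]
    exact (red_cons.mp h).2

/-- THEOREM R : reduced words are geodesic. -/
theorem len_red {l : List (Fin k × Bool)} (h : Red F l) :
    len (wordProd k F l) = l.length := by
  rw [len_eq_lenT_nf, nf_red_word h]
  rfl


/-! ### geodesic words are reduced, and first letters are visible -/

lemma red_minword {l : List (Fin k × Bool)} {x : Grp k F} (hl : wordProd k F l = x)
    (hlen : l.length = len x) : Red F l :=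
  red_of_geodesic (by rw [hl]; exact hlen)

lemma fl_visible {α : Fin k × Bool} {x : Grp k F} {l : List (Fin k × Bool)}
    (hl : wordProd k F l = x) (hlen : l.length = len x) (hFL : FL α x) :
    ∃ p q, l = p ++ α :: q ∧ allCm F α p := by
  have hred : Red F l := red_minword hl hlen
  have hxne : len ((sym k F α)⁻¹ * x) + 1 = len x := (FL_iff.mp hFL).symm
  have hm : ¬ Red F (ii α :: l) := by
    intro hr
    have := len_red hr
    rw [wordProd_cons, sym_ii, hl] at this
    simp at this
    omega
  have hpat : HasPattern F (ii α :: l) := not_not.mp hm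
  rcases hasPattern_cons.mp hpat with hpp | hfc
  · exact absurd hpp hred
  · obtain ⟨p, q, hdecomp, hp⟩ := hfc
    rw [ii_ii] at hdecomp
    exact ⟨p, q, hdecomp, fun β hβ => cm_ii_left.mp (hp β hβ)⟩

/-- P1 : two distinct first letters commute and survive cancellation. -/
lemma fl_exchange {α β : Fin k × Bool} {x : Grp k F} (hα : FL α x) (hβ : FL β x)
    (hne : α ≠ β) : Cm F α β ∧ FL α ((sym k F β)⁻¹ * x) := by
  obtain ⟨t, ht, hlen⟩ := hβ.exists_word
  obtain ⟨p, q, hdecomp, hp⟩ := fl_visible ht hlen hα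
  cases p with
  | nil =>
    simp at hdecomp
    exact absurd hdecomp.1.symm hne
  | cons p0 p' =>
    rw [List.cons_append] at hdecomp
    injection hdecomp with h1 h2
    subst h1
    rw [allCm_cons] at hp
    refine ⟨hp.1, ?_⟩
    have ht' : wordProd k F t = (sym k F β)⁻¹ * x := by
      rw [← ht, wordProd_cons]; group
    have hlen' : t.length = len ((sym k F β)⁻¹ * x) := by
      have h3 := FL_iff.mp hβ
      simp at hlen
      omega
    exact FL_front_movable (h2 ▸ ht') (h2 ▸ hlen') hp.2

lemma le_split {y w : Grp k F} (h : le y w) :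
    ∃ p t, wordProd k F p = y ∧ p.length = len y ∧
      wordProd k F (p ++ t) = w ∧ (p ++ t).length = len w := by
  obtain ⟨p, hp, hplen⟩ := exists_minWord y
  obtain ⟨t, ht, htlen⟩ := exists_minWord (y⁻¹ * w)
  refine ⟨p, t, hp, hplen, ?_, ?_⟩
  · rw [wordProd_append, hp, ht]; group
  · unfold le at h
    simp [hplen, htlen]
    omega

/-- P8 : if `y ≤ w` and `α` is a first letter of `w` but not of `y`, then `α` commutes
with `y` and `y ≤ α⁻¹w`. -/
lemma fl_avoid {α : Fin k × Bool} {y w : Grp k F} (hyw : le y w) (hα : FL α w)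
    (hn : ¬ FL α y) : Commute (sym k F α) y ∧ le y ((sym k F α)⁻¹ * w) := by
  obtain ⟨p, t, hp, hplen, hu, hulen⟩ := le_split hyw
  obtain ⟨s, r, hdecomp, hs⟩ := fl_visible hu hulen hα
  have key : ∃ a', s = p ++ a' ∧ t = a' ++ α :: r := by
    rcases List.append_eq_append_iff.mp hdecomp with ⟨a', ha1, ha2⟩ | ⟨c', hc1, hc2⟩
    · exact ⟨a', ha1, ha2⟩
    · cases c' with
      | nil =>
        simp only [List.append_nil] at hc1
        simp only [List.nil_append] at hc2
        refine ⟨[], by rw [hc1]; simp, by rw [← hc2]; simp⟩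
      | cons c0 w' =>
        rw [List.cons_append] at hc2
        injection hc2 with h1 h2
        subst h1
        exfalso
        apply hn
        refine FL_front_movable (x := y) (p := s) (q := w') ?_ ?_ hs
        · rw [← hc1]; exact hp
        · rw [← hc1]; exact hplen
  obtain ⟨a', rfl, rfl⟩ := key
  rw [allCm_append] at hs
  have hcp : Commute (sym k F α) (wordProd k F p) := commute_sym_wordProd hs.1
  have hca : Commute (sym k F α) (wordProd k F a') := commute_sym_wordProd hs.2
  have hcy : Commute (sym k F α) y := by rw [← hp]; exact hcp
  refine ⟨hcy, ?_⟩
  have hword : wordProd k F (p ++ a' ++ r) = (sym k F α)⁻¹ * w := by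
    rw [eq_inv_mul_iff_mul_eq, ← hu]
    simp only [wordProd_append, wordProd_cons]
    rw [← mul_assoc, ← mul_assoc, hcp.eq, mul_assoc (wordProd k F p), hca.eq]
    simp only [mul_assoc]
  have hFLlen := FL_iff.mp hα
  have hwlen : len ((sym k F α)⁻¹ * w) = p.length + (a' ++ r).length := by
    have h6 := len_le_length hword
    simp only [List.length_append, List.length_cons] at hulen ⊢
    have h7 : len w ≤ len ((sym k F α)⁻¹ * w) + 1 := len_ge_aux α w
    simp only [List.length_append] at h6
    omega
  have h5 : y⁻¹ * ((sym k F α)⁻¹ * w) = wordProd k F (a' ++ r) := by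
    rw [← hword, ← hp]
    simp only [wordProd_append]
    group
  unfold le
  have h8 : len (y⁻¹ * ((sym k F α)⁻¹ * w)) ≤ (a' ++ r).length := by
    rw [h5]
    exact len_le_length rfl
  have h9 : len ((sym k F α)⁻¹ * w) ≤ len y + len (y⁻¹ * ((sym k F α)⁻¹ * w)) := by
    have e2 : (sym k F α)⁻¹ * w = y * (y⁻¹ * ((sym k F α)⁻¹ * w)) := by group
    calc len ((sym k F α)⁻¹ * w) = len (y * (y⁻¹ * ((sym k F α)⁻¹ * w))) := by rw [← e2]
      _ ≤ _ := len_mul_le _ _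
  omega


/-! ### P3 : no common first letter means lengths add -/

lemma allCm_ii_revInv {γ : Fin k × Bool} {b : List (Fin k × Bool)} (h : allCm F γ b) :
    allCm F (ii γ) (revInv b) := fun δ hδ => (allCm_revInv h δ hδ : Cm F γ δ)

lemma len_add_of_no_common_fl {x y : Grp k F} (h : ∀ γ, ¬ (FL γ x ∧ FL γ y)) :
    len (x⁻¹ * y) = len x + len y := by
  obtain ⟨p, hp, hplen⟩ := exists_minWord x
  obtain ⟨q, hq, hqlen⟩ := exists_minWord y
  have hredp : Red F p := red_minword hp hplen
  have hredq : Red F q := red_minword hq hqlen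
  have hredu : Red F (revInv p) := red_revInv hredp
  have hfl_x : ∀ (γ : Fin k × Bool) (a w : List (Fin k × Bool)),
      revInv p = a ++ γ :: w → allCm F γ w → FL (ii γ) x := by
    intro γ a w hc1 hw
    have hp2 : p = revInv w ++ ii γ :: revInv a := by
      have := congrArg revInv hc1
      rw [revInv_revInv, revInv_append, revInv_cons] at this
      rw [this]
      simp
    exact FL_front_movable (x := x) (hp2 ▸ hp) (hp2 ▸ hplen) (allCm_ii_revInv hw)
  have hredconcat : Red F (revInv p ++ q) := by
    rintro ⟨a, γ, b, c, heq, hb⟩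
    rcases List.append_eq_append_iff.mp heq with ⟨a', ha1, ha2⟩ | ⟨c', hc1, hc2⟩
    · exact hredq ⟨a', γ, b, c, ha2, hb⟩
    · cases c' with
      | nil =>
        simp only [List.nil_append] at hc2
        exact hredq ⟨[], γ, b, c, by rw [← hc2]; rfl, hb⟩
      | cons γ0 w =>
        rw [List.cons_append] at hc2
        injection hc2 with h1 h2
        subst h1
        rcases List.append_eq_append_iff.mp h2 with ⟨a2, hb1, hb2⟩ | ⟨c2, hb1, hb2⟩
        · cases a2 with
          | nil =>
            simp only [List.append_nil] at hb1
            simp only [List.nil_append] at hb2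
            refine h (ii γ) ⟨hfl_x γ a w hc1 (hb1 ▸ hb), ?_⟩
            exact FL_of_word (by rw [hb2]; exact hq) (by rw [hb2]; exact hqlen)
          | cons μ w2 =>
            rw [List.cons_append] at hb2
            injection hb2 with h3 h4
            subst h3
            exact hredu ⟨a, γ, b, w2, by rw [hc1, hb1], hb⟩
        · subst hb1
          rw [allCm_append] at hb
          refine h (ii γ) ⟨hfl_x γ a w hc1 hb.1, ?_⟩
          refine FL_front_movable (x := y) (p := c2) (q := c) ?_ ?_ ?_
          · rw [← hb2]; exact hq
          · rw [← hb2]; exact hqlen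
          · exact fun δ hδ => (hb.2 δ hδ : Cm F γ δ)
  have hprod : wordProd k F (revInv p ++ q) = x⁻¹ * y := by
    rw [wordProd_append, wordProd_revInv, hp, hq]
  have := len_red hredconcat
  rw [hprod] at this
  simp only [List.length_append, revInv_length] at this
  omega

/-! ### the cross lemma -/

lemma fl_cross_aux :
    ∀ n {α : Fin k × Bool} {x y w : Grp k F}, len y ≤ n → le x w → le y w → FL α x →
      ¬ FL α y → FL α (y⁻¹ * x) := by
  intro n
  induction n with
  | zero =>
    intro α x y w hn hx hy hα hny
    have h1 : y = 1 := len_eq_zero_iff.mp (by omega)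
    subst h1
    simpa using hα
  | succ n ih =>
    intro α x y w hn hx hy hα hny
    by_cases hy1 : y = 1
    · subst hy1; simpa using hα
    · obtain ⟨β, hβ⟩ := FL_head hy1
      have hαβ : α ≠ β := fun h => hny (h ▸ hβ)
      have hβw : FL β w := hβ.trans hy
      have hβlen := FL_iff.mp hβ
      have hy' : le ((sym k F β)⁻¹ * y) ((sym k F β)⁻¹ * w) := le_cancel_left hβ hy
      have hlen' : len ((sym k F β)⁻¹ * y) ≤ n := by omega
      have hαw : FL α w := hα.trans hx
      have hcmαβ : Cm F α β := (fl_exchange hαw hβw hαβ).1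
      have hny' : ¬ FL α ((sym k F β)⁻¹ * y) := by
        intro hcon
        apply hny
        have hcomm : Commute (sym k F β) (sym k F α) := commute_sym hcmαβ.symm
        have hlen2 : len (sym k F β * ((sym k F β)⁻¹ * y)) =
            len ((sym k F β)⁻¹ * y) + 1 := by
          rw [show sym k F β * ((sym k F β)⁻¹ * y) = y by group]
          omega
        have h9 := FL_mul_of_commute hcomm hcon hlen2
        rwa [show sym k F β * ((sym k F β)⁻¹ * y) = y by group] at h9
      by_cases hβx : FL β x
      · obtain ⟨-, hαx'⟩ := fl_exchange hα hβx hαβ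
        have hx' : le ((sym k F β)⁻¹ * x) ((sym k F β)⁻¹ * w) := le_cancel_left hβx hx
        have h9 := ih hlen' hx' hy' hαx' hny'
        rwa [show ((sym k F β)⁻¹ * y)⁻¹ * ((sym k F β)⁻¹ * x) = y⁻¹ * x by group] at h9
      · obtain ⟨hcomx, hxw'⟩ := fl_avoid hx hβw hβx
        have hv := ih hlen' hxw' hy' hα hny'
        have hxy : y⁻¹ * x = (((sym k F β)⁻¹ * y)⁻¹ * x) * (sym k F β)⁻¹ := by
          have e1 : sym k F β * x * (sym k F β)⁻¹ = x := by
            rw [hcomx.eq]; group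
          calc y⁻¹ * x = y⁻¹ * (sym k F β * x * (sym k F β)⁻¹) := by rw [e1]
            _ = (((sym k F β)⁻¹ * y)⁻¹ * x) * (sym k F β)⁻¹ := by group
        set v := ((sym k F β)⁻¹ * y)⁻¹ * x with hvdef
        have hne2 : len (v * (sym k F β)⁻¹) ≠ len v := by
          have := len_mul_sym_ne v (ii β)
          rwa [sym_ii] at this
        have hub : len (v * (sym k F β)⁻¹) ≤ len v + 1 := by
          have h9 := len_mul_le v ((sym k F β)⁻¹)
          have h10 : len ((sym k F β)⁻¹ : Grp k F) = 1 := by rw [len_inv, len_sym]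
          omega
        have hlb : len v ≤ len (v * (sym k F β)⁻¹) + 1 := by
          have h11 := len_mul_le (v * (sym k F β)⁻¹) (sym k F β)
          rw [len_sym] at h11
          have e2 : (v * (sym k F β)⁻¹) * sym k F β = v := by group
          rw [e2] at h11
          exact h11
        rcases Nat.lt_or_ge (len v) (len (v * (sym k F β)⁻¹)) with hcase | hcase
        · -- length goes up : α survives on the left
          have hv' := FL_iff.mp hv
          apply FL_of_le
          rw [hxy]
          have e3 : (sym k F α)⁻¹ * (v * (sym k F β)⁻¹) =
              ((sym k F α)⁻¹ * v) * (sym k F β)⁻¹ := by group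
          rw [e3]
          have h9 := len_mul_le ((sym k F α)⁻¹ * v) ((sym k F β)⁻¹)
          have h10 : len ((sym k F β)⁻¹ : Grp k F) = 1 := by rw [len_inv, len_sym]
          omega
        · -- length goes down : find α inside the shorter word
          have hdown : len (v * (sym k F β)⁻¹) + 1 = len v := by omega
          obtain ⟨m₂, hm₂, hm₂len⟩ := exists_minWord (v * (sym k F β)⁻¹)
          have hword : wordProd k F (m₂ ++ [β]) = v := by
            rw [wordProd_append, hm₂, wordProd_singleton]
            group
          have hwordlen : (m₂ ++ [β]).length = len v := by
            simp [hm₂len]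
            omega
          obtain ⟨p, q, hdecomp, hpcm⟩ := fl_visible hword hwordlen hv
          have key : ∃ w', m₂ = p ++ α :: w' := by
            rcases List.append_eq_append_iff.mp hdecomp with ⟨a', ha1, ha2⟩ |
              ⟨c', hc1, hc2⟩
            · cases a' with
              | nil =>
                simp only [List.nil_append] at ha2
                injection ha2 with h3 h4
                exact absurd h3 (Ne.symm hαβ)
              | cons a0 w2 =>
                rw [List.cons_append] at ha2
                injection ha2 with h3 h4
                exact absurd h4.symm (by simp)
            · cases c' with
              | nil =>
                simp only [List.append_nil] at hc1
                simp only [List.nil_append] at hc2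
                injection hc2 with h3 h4
                exact absurd h3 hαβ
              | cons c0 w2 =>
                rw [List.cons_append] at hc2
                injection hc2 with h3 h4
                subst h3
                exact ⟨w2, hc1⟩
          obtain ⟨w', hw'⟩ := key
          rw [hxy]
          exact FL_front_movable (hw' ▸ hm₂) (hw' ▸ hm₂len) hpcm


/-! ### existence of bounded joins -/

theorem join_exists_aux :
    ∀ n (x y w : Grp k F), len w ≤ n → le x w → le y w →
      ∃ j, le x j ∧ le y j ∧ (∀ u, le x u → le y u → le j u) ∧
        len (x⁻¹ * y) = len (x⁻¹ * j) + len (j⁻¹ * y) := by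
  intro n
  induction n with
  | zero =>
    intro x y w hn hx hy
    have hw1 : w = 1 := len_eq_zero_iff.mp (by omega)
    subst hw1
    have hx1 : x = 1 := by
      have := len_mono hx
      exact len_eq_zero_iff.mp (by simp at this; omega)
    subst hx1
    refine ⟨y, le_one_left y, le_rfl' y, fun u _ h2 => h2, by simp⟩
  | succ n ih =>
    intro x y w hn hx hy
    by_cases hx1 : x = 1
    · subst hx1
      refine ⟨y, le_one_left y, le_rfl' y, fun u _ h2 => h2, by simp⟩
    · obtain ⟨α, hα⟩ := FL_head hx1
      have hαw : FL α w := hα.trans hx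
      have hFLw := FL_iff.mp hαw
      have hFLx := FL_iff.mp hα
      have hbound : len ((sym k F α)⁻¹ * w) ≤ n := by omega
      by_cases hαy : FL α y
      · obtain ⟨j', h1, h2, h3, h4⟩ := ih ((sym k F α)⁻¹ * x) ((sym k F α)⁻¹ * y)
          ((sym k F α)⁻¹ * w) hbound (le_cancel_left hα hx) (le_cancel_left hαy hy)
        have hj'w : le j' ((sym k F α)⁻¹ * w) :=
          h3 _ (le_cancel_left hα hx) (le_cancel_left hαy hy)
        obtain ⟨hjw, hjlen⟩ := le_mul_left hαw hj'w
        have hFLy := FL_iff.mp hαy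
        refine ⟨sym k F α * j', ?_, ?_, ?_, ?_⟩
        · have h1' := h1
          unfold le at h1' ⊢
          rw [show x⁻¹ * (sym k F α * j') = ((sym k F α)⁻¹ * x)⁻¹ * j' by group]
          omega
        · have h2' := h2
          unfold le at h2' ⊢
          rw [show y⁻¹ * (sym k F α * j') = ((sym k F α)⁻¹ * y)⁻¹ * j' by group]
          omega
        · intro u hxu hyu
          have hαu : FL α u := hα.trans hxu
          exact (le_mul_left hαu
            (h3 _ (le_cancel_left hα hxu) (le_cancel_left hαy hyu))).1
        · rw [show x⁻¹ * y = ((sym k F α)⁻¹ * x)⁻¹ * ((sym k F α)⁻¹ * y) by group,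
            show x⁻¹ * (sym k F α * j') = ((sym k F α)⁻¹ * x)⁻¹ * j' by group,
            show (sym k F α * j')⁻¹ * y = j'⁻¹ * ((sym k F α)⁻¹ * y) by group]
          exact h4
      · obtain ⟨hcom, hyw'⟩ := fl_avoid hy hαw hαy
        obtain ⟨j', h1, h2, h3, h4⟩ := ih ((sym k F α)⁻¹ * x) y ((sym k F α)⁻¹ * w)
          hbound (le_cancel_left hα hx) hyw'
        have hj'w : le j' ((sym k F α)⁻¹ * w) := h3 _ (le_cancel_left hα hx) hyw'
        obtain ⟨hjw, hjlen⟩ := le_mul_left hαw hj'w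
        have lexj : le x (sym k F α * j') := by
          have h1' := h1
          unfold le at h1' ⊢
          rw [show x⁻¹ * (sym k F α * j') = ((sym k F α)⁻¹ * x)⁻¹ * j' by group]
          omega
        have leyj : le y (sym k F α * j') := by
          have h2' := h2
          have e6 : y⁻¹ * (sym k F α * j') = sym k F α * (y⁻¹ * j') := by
            rw [← mul_assoc, ← hcom.inv_right.eq, mul_assoc]
          have hb1 : len (sym k F α * (y⁻¹ * j')) ≤ 1 + len (y⁻¹ * j') := by
            have := len_mul_le (sym k F α) (y⁻¹ * j')
            rwa [len_sym] at this
          have hb2 : len (sym k F α * j') ≤ len y + len (y⁻¹ * (sym k F α * j')) := by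
            have e7 : sym k F α * j' = y * (y⁻¹ * (sym k F α * j')) := by group
            calc len (sym k F α * j') = len (y * (y⁻¹ * (sym k F α * j'))) := by rw [← e7]
              _ ≤ _ := len_mul_le _ _
          unfold le at h2' ⊢
          rw [e6] at hb2 ⊢
          omega
        refine ⟨sym k F α * j', lexj, leyj, ?_, ?_⟩
        · intro u hxu hyu
          have hαu : FL α u := hα.trans hxu
          have hyu' : le y ((sym k F α)⁻¹ * u) := (fl_avoid hyu hαu hαy).2
          exact (le_mul_left hαu (h3 _ (le_cancel_left hα hxu) hyu')).1
        · -- betweenness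
          have hflyx : FL α (y⁻¹ * x) :=
            fl_cross_aux (len y) (le_refl _) hx hy hα hαy
          have hflc := FL_iff.mp hflyx
          -- (i) : len (x⁻¹y) = len ((α⁻¹x)⁻¹ y) + 1
          have e8 : ((sym k F α)⁻¹ * x)⁻¹ * y = (x⁻¹ * y) * sym k F α := by
            calc ((sym k F α)⁻¹ * x)⁻¹ * y = x⁻¹ * (sym k F α * y) := by group
              _ = x⁻¹ * (y * sym k F α) := by rw [hcom.eq]
              _ = (x⁻¹ * y) * sym k F α := by group
          have e9 : ((x⁻¹ * y) * sym k F α)⁻¹ = (sym k F α)⁻¹ * (y⁻¹ * x) := by group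
          have hi1 : len (((sym k F α)⁻¹ * x)⁻¹ * y) = len ((sym k F α)⁻¹ * (y⁻¹ * x)) := by
            rw [e8, ← len_inv ((x⁻¹ * y) * sym k F α), e9]
          have hi2 : len (y⁻¹ * x) = len (x⁻¹ * y) := by
            rw [← len_inv (x⁻¹ * y), show (x⁻¹ * y)⁻¹ = y⁻¹ * x by group]
          -- (ii) : len ((αj')⁻¹ y) = len (j'⁻¹ y) + 1
          have e10 : (sym k F α * j')⁻¹ * y = (j'⁻¹ * y) * (sym k F α)⁻¹ := by
            calc (sym k F α * j')⁻¹ * y = j'⁻¹ * ((sym k F α)⁻¹ * y) := by group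
              _ = j'⁻¹ * (y * (sym k F α)⁻¹) := by rw [hcom.inv_left.eq]
              _ = (j'⁻¹ * y) * (sym k F α)⁻¹ := by group
          have hii : len ((j'⁻¹ * y) * (sym k F α)⁻¹) = len (j'⁻¹ * y) + 1 := by
            have hne2 : len ((j'⁻¹ * y) * (sym k F α)⁻¹) ≠ len (j'⁻¹ * y) := by
              have := len_mul_sym_ne (j'⁻¹ * y) (ii α)
              rwa [sym_ii] at this
            have hub : len ((j'⁻¹ * y) * (sym k F α)⁻¹) ≤ len (j'⁻¹ * y) + 1 := by
              have h11 := len_mul_le (j'⁻¹ * y) ((sym k F α)⁻¹)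
              have h12 : len ((sym k F α)⁻¹ : Grp k F) = 1 := by rw [len_inv, len_sym]
              omega
            have hlb : len (j'⁻¹ * y) ≤ len ((j'⁻¹ * y) * (sym k F α)⁻¹) + 1 := by
              have h11 := len_mul_le ((j'⁻¹ * y) * (sym k F α)⁻¹) (sym k F α)
              rw [len_sym] at h11
              have e11 : ((j'⁻¹ * y) * (sym k F α)⁻¹) * sym k F α = j'⁻¹ * y := by group
              rw [e11] at h11
              omega
            rcases Nat.lt_or_ge (len ((j'⁻¹ * y) * (sym k F α)⁻¹)) (len (j'⁻¹ * y))
              with hcase | hcase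
            · exfalso
              have hbadFL : FL (ii α) (y⁻¹ * j') := by
                rw [FL_iff, sym_ii, inv_inv]
                have e12 : ((j'⁻¹ * y) * (sym k F α)⁻¹)⁻¹ = sym k F α * (y⁻¹ * j') := by
                  group
                have e13 : (j'⁻¹ * y)⁻¹ = y⁻¹ * j' := by group
                have h13 : len (sym k F α * (y⁻¹ * j')) =
                    len ((j'⁻¹ * y) * (sym k F α)⁻¹) := by
                  rw [← e12, len_inv]
                have h14 : len (y⁻¹ * j') = len (j'⁻¹ * y) := by rw [← e13, len_inv]
                omega
              obtain ⟨hz1, hz2⟩ := le_mul_right h2 hbadFL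
              have hz3 : le (y * sym k F (ii α)) ((sym k F α)⁻¹ * w) :=
                le_trans' hz1 hj'w
              obtain ⟨hz4, hz5⟩ := le_mul_left hαw hz3
              have e14 : sym k F α * (y * sym k F (ii α)) = y := by
                rw [sym_ii, ← mul_assoc, hcom.eq]
                group
              rw [e14] at hz5
              omega
            · omega
          rw [e10, hii,
            show x⁻¹ * (sym k F α * j') = ((sym k F α)⁻¹ * x)⁻¹ * j' by group]
          rw [show ((sym k F α)⁻¹ * x)⁻¹ * y = (x⁻¹ * y) * sym k F α by exact e8] at h4
          have h15 : len ((x⁻¹ * y) * sym k F α) = len (x⁻¹ * y) - 1 ∧ 1 ≤ len (x⁻¹ * y) := by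
            have h16 : len ((x⁻¹ * y) * sym k F α) = len ((sym k F α)⁻¹ * (y⁻¹ * x)) := by
              rw [← len_inv ((x⁻¹ * y) * sym k F α), e9]
            omega
          omega


/-! ### existence of meets -/

theorem meet_exists (x y : Grp k F) :
    ∃ m, le m x ∧ le m y ∧ (∀ w, le w x → le w y → le w m) ∧
      len (x⁻¹ * y) = len (m⁻¹ * x) + len (m⁻¹ * y) := by
  classical
  set S : Set ℕ := {n | ∃ m : Grp k F, le m x ∧ le m y ∧ len m = n} with hS
  have h0 : (0 : ℕ) ∈ S := ⟨1, le_one_left x, le_one_left y, len_one⟩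
  have hbdd : BddAbove S := by
    refine ⟨len x, ?_⟩
    rintro n ⟨m, hm, -, rfl⟩
    exact len_mono hm
  obtain ⟨m, hmx, hmy, hmlen⟩ : sSup S ∈ S := Nat.sSup_mem ⟨0, h0⟩ hbdd
  have hmax : ∀ m' : Grp k F, le m' x → le m' y → len m' ≤ sSup S := by
    intro m' h1 h2
    exact le_csSup hbdd ⟨m', h1, h2, rfl⟩
  refine ⟨m, hmx, hmy, ?_, ?_⟩
  · intro w hwx hwy
    obtain ⟨j, hj1, hj2, hj3, -⟩ :=
      join_exists_aux (len x) w m x (le_refl _) hwx hmx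
    have hjx : le j x := hj3 x hwx hmx
    have hjy : le j y := hj3 y hwy hmy
    have hlenj : len j ≤ len m := by
      have := hmax j hjx hjy
      omega
    have hmeq : m = j := eq_of_le_of_len_le hj2 hlenj
    rw [hmeq]
    exact hj1
  · have hnof : ∀ γ, ¬ (FL γ (m⁻¹ * x) ∧ FL γ (m⁻¹ * y)) := by
      rintro γ ⟨h1, h2⟩
      obtain ⟨h3, h4⟩ := le_mul_right hmx h1
      obtain ⟨h5, -⟩ := le_mul_right hmy h2
      have := hmax _ h3 h5
      omega
    have h6 := len_add_of_no_common_fl hnof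
    rw [show (m⁻¹ * x)⁻¹ * (m⁻¹ * y) = x⁻¹ * y by group] at h6
    exact h6

lemma len_inv_mul (u v : Grp k F) : len (u⁻¹ * v) = len (v⁻¹ * u) := by
  rw [← len_inv (u⁻¹ * v), show (u⁻¹ * v)⁻¹ = v⁻¹ * u by group]

/-- `m` is the meet `x ∧ y` (greatest lower bound w.r.t. `le`). -/
def IsMeet {k : ℕ} {F : Set (Sym2 (Fin k))} (x y m : Grp k F) : Prop :=
  le m x ∧ le m y ∧ ∀ w, le w x → le w y → le w m

/-- `j` is the (finite) join `x ∨ y` (least upper bound w.r.t. `le`);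
`x ∨ y` is finite iff such a `j` exists. -/
def IsJoin {k : ℕ} {F : Set (Sym2 (Fin k))} (x y j : Grp k F) : Prop :=
  le x j ∧ le y j ∧ ∀ w, le x w → le y w → le j w

/-- `j` is the (finite) join of the set `S`. -/
def IsJoinSet {k : ℕ} {F : Set (Sym2 (Fin k))} (S : Set (Grp k F)) (j : Grp k F) : Prop :=
  (∀ s ∈ S, le s j) ∧ ∀ w, (∀ s ∈ S, le s w) → le j w

/-- `y` is a segment of `a` if `a = x·y·z` for some `x, z`. -/
def Segment {k : ℕ} {F : Set (Sym2 (Fin k))} (y a : Grp k F) : Prop :=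
  ∃ x z, a = x * y * z ∧ len a = len x + len y + len z

/-- The left-invariant metric `dist(x,y) = |x⁻¹y|`. -/
noncomputable def dist {k : ℕ} {F : Set (Sym2 (Fin k))} (x y : Grp k F) : ℕ :=
  len (x⁻¹ * y)

/-- A nonempty set `L` is convex if `x, z ∈ L` and `dist(x,y) + dist(y,z) = dist(x,z)`
imply `y ∈ L`. -/
def ConvexSet {k : ℕ} {F : Set (Sym2 (Fin k))} (L : Set (Grp k F)) : Prop :=
  L.Nonempty ∧ ∀ x z y : Grp k F, x ∈ L → z ∈ L →
    dist x y + dist y z = dist x z → y ∈ L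

/-- An ideal: nonempty, downward closed, and closed under finite joins. -/
def IdealSet {k : ℕ} {F : Set (Sym2 (Fin k))} (I : Set (Grp k F)) : Prop :=
  I.Nonempty ∧ (∀ x ∈ I, ∀ y, le y x → y ∈ I) ∧
    (∀ x ∈ I, ∀ y ∈ I, ∀ j, IsJoin x y j → j ∈ I)

/-- `H` is closed if both `H` and `H⁻¹` are ideals. -/
def ClosedSet {k : ℕ} {F : Set (Sym2 (Fin k))} (H : Set (Grp k F)) : Prop :=
  IdealSet H ∧ IdealSet H⁻¹

/-- `m` is a minimal element of `S` w.r.t. `le`. -/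
def MinimalIn {k : ℕ} {F : Set (Sym2 (Fin k))} (S : Set (Grp k F)) (m : Grp k F) : Prop :=
  m ∈ S ∧ ∀ x ∈ S, le x m → x = m

/-- `l` is a reduced (i.e. shortest) word representing `x`. -/
def MinWord {k : ℕ} {F : Set (Sym2 (Fin k))} (x : Grp k F) (l : List (Fin k × Bool)) : Prop :=
  wordProd k F l = x ∧ l.length = len x

open Classical in
/-- `#_α(x)`: the number of occurrences of the symbol `α` (not counting `α⁻¹`)
in a reduced word representing `x`. -/
noncomputable def symCount {k : ℕ} {F : Set (Sym2 (Fin k))} (α : Fin k × Bool)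
    (x : Grp k F) : ℕ :=
  if h : ∃ l, MinWord x l then h.choose.count α else 0

/-- The symbol `α` occurs in `x`. -/
def Occurs {k : ℕ} {F : Set (Sym2 (Fin k))} (α : Fin k × Bool) (x : Grp k F) : Prop :=
  0 < symCount α x

/-- `α` is a maximal symbol of `x`, i.e. `xα⁻¹ ≤ x`. -/
def MaxSym {k : ℕ} {F : Set (Sym2 (Fin k))} (α : Fin k × Bool) (x : Grp k F) : Prop :=
  le (x * (sym k F α)⁻¹) x

/-- A peak: an element with precisely one maximal symbol. -/
def IsPeak {k : ℕ} {F : Set (Sym2 (Fin k))} (p : Grp k F) : Prop :=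
  ∃! α : Fin k × Bool, MaxSym α p

/-- An `α`-peak: a peak whose unique maximal symbol is `α`. -/
def AlphaPeak {k : ℕ} {F : Set (Sym2 (Fin k))} (α : Fin k × Bool) (p : Grp k F) : Prop :=
  MaxSym α p ∧ ∀ β, MaxSym β p → β = α

/-- The set of generator indices occurring in `b`. -/
def Support {k : ℕ} {F : Set (Sym2 (Fin k))} (b : Grp k F) : Set (Fin k) :=
  {i | Occurs (i, true) b ∨ Occurs (i, false) b}

/-- `b` is connected: the generators occurring in `b` induce a connected subgraph of
the graph `([k], F)`. -/
def Conn {k : ℕ} {F : Set (Sym2 (Fin k))} (b : Grp k F) : Prop :=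
  (SimpleGraph.induce (Support b) (SimpleGraph.fromEdgeSet F)).Connected

/-- `b` is cyclically reduced: `b ∧ b⁻¹ = 1`. -/
def CycRed {k : ℕ} {F : Set (Sym2 (Fin k))} (b : Grp k F) : Prop :=
  IsMeet b b⁻¹ 1

/-- a nonempty `L` is convex iff (i) it is closed under betweenness
w.r.t. `≤` and (ii) it is closed under meets and finite joins. -/
theorem stmt5 {k : ℕ} (hk : 1 ≤ k) {F : Set (Sym2 (Fin k))}
    (L : Set (Grp k F)) (hL : L.Nonempty) :
    ConvexSet L ↔
      ((∀ x y z : Grp k F, x ∈ L → z ∈ L → le x y → le y z → y ∈ L) ∧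
       (∀ x ∈ L, ∀ y ∈ L,
          (∀ m, IsMeet x y m → m ∈ L) ∧ (∀ j, IsJoin x y j → j ∈ L))) := by
  constructor
  · rintro ⟨-, hconv⟩
    constructor
    · intro x y z hxL hzL hxy hyz
      apply hconv x z y hxL hzL
      unfold dist
      have h1 : len (x⁻¹ * z) ≤ len (x⁻¹ * y) + len (y⁻¹ * z) := by
        have h2 := len_mul_le (x⁻¹ * y) (y⁻¹ * z)
        rwa [show (x⁻¹ * y) * (y⁻¹ * z) = x⁻¹ * z by group] at h2
      have h3 : len z ≤ len x + len (x⁻¹ * z) := by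
        have h4 := len_mul_le x (x⁻¹ * z)
        rwa [show x * (x⁻¹ * z) = z by group] at h4
      unfold le at hxy hyz
      omega
    · intro x hx y hy
      constructor
      · rintro m ⟨hm1, hm2, hm3⟩
        obtain ⟨m₀, h1, h2, h3, h4⟩ := meet_exists x y
        have hmeq : m = m₀ := le_antisymm' (h3 m hm1 hm2) (hm3 m₀ h1 h2)
        apply hconv x y m hx hy
        unfold dist
        rw [hmeq, len_inv_mul x m₀]
        omega
      · rintro j ⟨hj1, hj2, hj3⟩
        obtain ⟨j₀, h1, h2, h3, h4⟩ := join_exists_aux (len j) x y j (le_refl _) hj1 hj2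
        have hjeq : j = j₀ := le_antisymm' (hj3 j₀ h1 h2) (h3 j hj1 hj2)
        apply hconv x y j hx hy
        unfold dist
        rw [hjeq]
        omega
  · rintro ⟨hbet, hcl⟩
    refine ⟨hL, ?_⟩
    intro x z y hx hz hdist
    unfold dist at hdist
    obtain ⟨m, hm1, hm2, hm3, hm4⟩ := meet_exists x z
    obtain ⟨a, ha1, ha2, ha3, ha4⟩ := meet_exists x y
    obtain ⟨b, hb1, hb2, hb3, hb4⟩ := meet_exists z y
    obtain ⟨t, ht1, ht2, ht3, ht4⟩ := meet_exists a b
    obtain ⟨j, hj1, hj2, hj3, hj4⟩ :=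
      join_exists_aux (len y) a b y (le_refl _) ha2 hb2
    have hmL : m ∈ L := (hcl x hx z hz).1 m ⟨hm1, hm2, hm3⟩
    have htm : le t m := hm3 t (le_trans' ht1 ha1) (le_trans' ht2 hb1)
    have hjy : le j y := hj3 y ha2 hb2
    -- numerics
    have sxa := len_sub_of_le ha1
    have sya := len_sub_of_le ha2
    have szb := len_sub_of_le hb1
    have syb := len_sub_of_le hb2
    have sxm := len_sub_of_le hm1
    have szm := len_sub_of_le hm2
    have sat := len_sub_of_le ht1
    have sbt := len_sub_of_le ht2
    have saj := len_sub_of_le hj1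
    have sbj := len_sub_of_le hj2
    have syj := len_mono hjy
    have stm := len_mono htm
    have mxa := len_mono ha1
    have mya := len_mono ha2
    have mzb := len_mono hb1
    have myb := len_mono hb2
    have mxm := len_mono hm1
    have mzm := len_mono hm2
    have mat := len_mono ht1
    have mbt := len_mono ht2
    have maj := len_mono hj1
    have mbj := len_mono hj2
    have hyz' : len (y⁻¹ * z) = len (z⁻¹ * y) := len_inv_mul y z
    have hlenj : len j = len y ∧ len t = len m := by
      rw [ha4, hyz', hb4, hm4] at hdist
      rw [ht4, len_inv_mul j b, saj, sbj] at hj4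
      omega
    have hjeq : j = y := eq_of_le_of_len_le hjy (by omega)
    have hteq : t = m := eq_of_le_of_len_le htm (by omega)
    have haL : a ∈ L := hbet m a x hmL hx (hteq ▸ ht1) ha1
    have hbL : b ∈ L := hbet m b z hmL hz (hteq ▸ ht2) hb1
    exact (hcl a haL b hbL).2 y ⟨hjeq ▸ hj1, hjeq ▸ hj2,
      fun u hu1 hu2 => hjeq ▸ hj3 u hu1 hu2⟩

end GraphGroupPaper
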